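/- arXiv:math/0508018 — 2 statements merged into one kernel-verified Lean document; each statement's English description precedes it below -/
import Mathlib

section
/- For every squarefree positive integer d, the quadratic forms d·Q₁ and Q_d on ℚ²¹ are equivalent over ℚ; that is, there exists a ℚ-linear automorphism g of ℚ²¹ such that Q_d(g x) = d·Q₁(x) for all x ∈ ℚ²¹. -/
/-- The quadratic form `Q_d` on `ℚ²¹`:
`Q_d(x) = −x₁² − x₂² + x₃² + ⋯ + x₂₀² + d·x₂₁²` (indices shifted to `0,…,20`). -/
def Qd (d : ℚ) (x : Fin 21 → ℚ) : ℚ :=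
  -(x 0 ^ 2) - x 1 ^ 2 +
    ∑ i ∈ Finset.univ.filter (fun i : Fin 21 => 2 ≤ i.val ∧ i.val ≤ 19), x i ^ 2 +
    d * x 20 ^ 2

private def Fwd (d a b c e : ℚ) (x : Fin 21 → ℚ) : Fin 21 → ℚ :=
  ![((d+1)*x 0 + (d-1)*x 2)/2,
    ((d+1)*x 1 + (d-1)*x 3)/2,
    ((d-1)*x 0 + (d+1)*x 2)/2,
    ((d-1)*x 1 + (d+1)*x 3)/2,
    a*(x 4) - b*(x 5) - c*(x 6) - e*(x 7),
    a*(x 5) + b*(x 4) + c*(x 7) - e*(x 6),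
    a*(x 6) - b*(x 7) + c*(x 4) + e*(x 5),
    a*(x 7) + b*(x 6) - c*(x 5) + e*(x 4),
    a*(x 8) - b*(x 9) - c*(x 10) - e*(x 11),
    a*(x 9) + b*(x 8) + c*(x 11) - e*(x 10),
    a*(x 10) - b*(x 11) + c*(x 8) + e*(x 9),
    a*(x 11) + b*(x 10) - c*(x 9) + e*(x 8),
    a*(x 12) - b*(x 13) - c*(x 14) - e*(x 15),
    a*(x 13) + b*(x 12) + c*(x 15) - e*(x 14),
    a*(x 14) - b*(x 15) + c*(x 12) + e*(x 13),
    a*(x 15) + b*(x 14) - c*(x 13) + e*(x 12),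
    a*(x 16) - b*(x 17) - c*(x 18) - e*(x 19),
    a*(x 17) + b*(x 16) + c*(x 19) - e*(x 18),
    a*(x 18) - b*(x 19) + c*(x 16) + e*(x 17),
    a*(x 19) + b*(x 18) - c*(x 17) + e*(x 16),
    x 20]

private def Finv (d a b c e : ℚ) (x : Fin 21 → ℚ) : Fin 21 → ℚ :=
  ![((d+1)*x 0 - (d-1)*x 2)/(2*d),
    ((d+1)*x 1 - (d-1)*x 3)/(2*d),
    (-(d-1)*x 0 + (d+1)*x 2)/(2*d),
    (-(d-1)*x 1 + (d+1)*x 3)/(2*d),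
    (a*(x 4) + b*(x 5) + c*(x 6) + e*(x 7))/d,
    (a*(x 5) - b*(x 4) - c*(x 7) + e*(x 6))/d,
    (a*(x 6) + b*(x 7) - c*(x 4) - e*(x 5))/d,
    (a*(x 7) - b*(x 6) + c*(x 5) - e*(x 4))/d,
    (a*(x 8) + b*(x 9) + c*(x 10) + e*(x 11))/d,
    (a*(x 9) - b*(x 8) - c*(x 11) + e*(x 10))/d,
    (a*(x 10) + b*(x 11) - c*(x 8) - e*(x 9))/d,
    (a*(x 11) - b*(x 10) + c*(x 9) - e*(x 8))/d,
    (a*(x 12) + b*(x 13) + c*(x 14) + e*(x 15))/d,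
    (a*(x 13) - b*(x 12) - c*(x 15) + e*(x 14))/d,
    (a*(x 14) + b*(x 15) - c*(x 12) - e*(x 13))/d,
    (a*(x 15) - b*(x 14) + c*(x 13) - e*(x 12))/d,
    (a*(x 16) + b*(x 17) + c*(x 18) + e*(x 19))/d,
    (a*(x 17) - b*(x 16) - c*(x 19) + e*(x 18))/d,
    (a*(x 18) + b*(x 19) - c*(x 16) - e*(x 17))/d,
    (a*(x 19) - b*(x 18) + c*(x 17) - e*(x 16))/d,
    x 20]

private lemma finmk_0 : (⟨0, by norm_num⟩ : Fin 21) = (0 : Fin 21) := rfl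
private lemma finmk_1 : (⟨1, by norm_num⟩ : Fin 21) = (1 : Fin 21) := rfl
private lemma finmk_2 : (⟨2, by norm_num⟩ : Fin 21) = (2 : Fin 21) := rfl
private lemma finmk_3 : (⟨3, by norm_num⟩ : Fin 21) = (3 : Fin 21) := rfl
private lemma finmk_4 : (⟨4, by norm_num⟩ : Fin 21) = (4 : Fin 21) := rfl
private lemma finmk_5 : (⟨5, by norm_num⟩ : Fin 21) = (5 : Fin 21) := rfl
private lemma finmk_6 : (⟨6, by norm_num⟩ : Fin 21) = (6 : Fin 21) := rfl
private lemma finmk_7 : (⟨7, by norm_num⟩ : Fin 21) = (7 : Fin 21) := rfl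
private lemma finmk_8 : (⟨8, by norm_num⟩ : Fin 21) = (8 : Fin 21) := rfl
private lemma finmk_9 : (⟨9, by norm_num⟩ : Fin 21) = (9 : Fin 21) := rfl
private lemma finmk_10 : (⟨10, by norm_num⟩ : Fin 21) = (10 : Fin 21) := rfl
private lemma finmk_11 : (⟨11, by norm_num⟩ : Fin 21) = (11 : Fin 21) := rfl
private lemma finmk_12 : (⟨12, by norm_num⟩ : Fin 21) = (12 : Fin 21) := rfl
private lemma finmk_13 : (⟨13, by norm_num⟩ : Fin 21) = (13 : Fin 21) := rfl
private lemma finmk_14 : (⟨14, by norm_num⟩ : Fin 21) = (14 : Fin 21) := rfl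
private lemma finmk_15 : (⟨15, by norm_num⟩ : Fin 21) = (15 : Fin 21) := rfl
private lemma finmk_16 : (⟨16, by norm_num⟩ : Fin 21) = (16 : Fin 21) := rfl
private lemma finmk_17 : (⟨17, by norm_num⟩ : Fin 21) = (17 : Fin 21) := rfl
private lemma finmk_18 : (⟨18, by norm_num⟩ : Fin 21) = (18 : Fin 21) := rfl
private lemma finmk_19 : (⟨19, by norm_num⟩ : Fin 21) = (19 : Fin 21) := rfl
private lemma finmk_20 : (⟨20, by norm_num⟩ : Fin 21) = (20 : Fin 21) := rfl
private lemma Fwd_apply_0 (d a b c e : ℚ) (x : Fin 21 → ℚ) : Fwd d a b c e x 0 = ((d+1)*x 0 + (d-1)*x 2)/2 := rfl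
private lemma Fwd_apply_1 (d a b c e : ℚ) (x : Fin 21 → ℚ) : Fwd d a b c e x 1 = ((d+1)*x 1 + (d-1)*x 3)/2 := rfl
private lemma Fwd_apply_2 (d a b c e : ℚ) (x : Fin 21 → ℚ) : Fwd d a b c e x 2 = ((d-1)*x 0 + (d+1)*x 2)/2 := rfl
private lemma Fwd_apply_3 (d a b c e : ℚ) (x : Fin 21 → ℚ) : Fwd d a b c e x 3 = ((d-1)*x 1 + (d+1)*x 3)/2 := rfl
private lemma Fwd_apply_4 (d a b c e : ℚ) (x : Fin 21 → ℚ) : Fwd d a b c e x 4 = a*(x 4) - b*(x 5) - c*(x 6) - e*(x 7) := rfl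
private lemma Fwd_apply_5 (d a b c e : ℚ) (x : Fin 21 → ℚ) : Fwd d a b c e x 5 = a*(x 5) + b*(x 4) + c*(x 7) - e*(x 6) := rfl
private lemma Fwd_apply_6 (d a b c e : ℚ) (x : Fin 21 → ℚ) : Fwd d a b c e x 6 = a*(x 6) - b*(x 7) + c*(x 4) + e*(x 5) := rfl
private lemma Fwd_apply_7 (d a b c e : ℚ) (x : Fin 21 → ℚ) : Fwd d a b c e x 7 = a*(x 7) + b*(x 6) - c*(x 5) + e*(x 4) := rfl
private lemma Fwd_apply_8 (d a b c e : ℚ) (x : Fin 21 → ℚ) : Fwd d a b c e x 8 = a*(x 8) - b*(x 9) - c*(x 10) - e*(x 11) := rfl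
private lemma Fwd_apply_9 (d a b c e : ℚ) (x : Fin 21 → ℚ) : Fwd d a b c e x 9 = a*(x 9) + b*(x 8) + c*(x 11) - e*(x 10) := rfl
private lemma Fwd_apply_10 (d a b c e : ℚ) (x : Fin 21 → ℚ) : Fwd d a b c e x 10 = a*(x 10) - b*(x 11) + c*(x 8) + e*(x 9) := rfl
private lemma Fwd_apply_11 (d a b c e : ℚ) (x : Fin 21 → ℚ) : Fwd d a b c e x 11 = a*(x 11) + b*(x 10) - c*(x 9) + e*(x 8) := rfl
private lemma Fwd_apply_12 (d a b c e : ℚ) (x : Fin 21 → ℚ) : Fwd d a b c e x 12 = a*(x 12) - b*(x 13) - c*(x 14) - e*(x 15) := rfl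
private lemma Fwd_apply_13 (d a b c e : ℚ) (x : Fin 21 → ℚ) : Fwd d a b c e x 13 = a*(x 13) + b*(x 12) + c*(x 15) - e*(x 14) := rfl
private lemma Fwd_apply_14 (d a b c e : ℚ) (x : Fin 21 → ℚ) : Fwd d a b c e x 14 = a*(x 14) - b*(x 15) + c*(x 12) + e*(x 13) := rfl
private lemma Fwd_apply_15 (d a b c e : ℚ) (x : Fin 21 → ℚ) : Fwd d a b c e x 15 = a*(x 15) + b*(x 14) - c*(x 13) + e*(x 12) := rfl
private lemma Fwd_apply_16 (d a b c e : ℚ) (x : Fin 21 → ℚ) : Fwd d a b c e x 16 = a*(x 16) - b*(x 17) - c*(x 18) - e*(x 19) := rfl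
private lemma Fwd_apply_17 (d a b c e : ℚ) (x : Fin 21 → ℚ) : Fwd d a b c e x 17 = a*(x 17) + b*(x 16) + c*(x 19) - e*(x 18) := rfl
private lemma Fwd_apply_18 (d a b c e : ℚ) (x : Fin 21 → ℚ) : Fwd d a b c e x 18 = a*(x 18) - b*(x 19) + c*(x 16) + e*(x 17) := rfl
private lemma Fwd_apply_19 (d a b c e : ℚ) (x : Fin 21 → ℚ) : Fwd d a b c e x 19 = a*(x 19) + b*(x 18) - c*(x 17) + e*(x 16) := rfl
private lemma Fwd_apply_20 (d a b c e : ℚ) (x : Fin 21 → ℚ) : Fwd d a b c e x 20 = x 20 := rfl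
private lemma Finv_apply_0 (d a b c e : ℚ) (x : Fin 21 → ℚ) : Finv d a b c e x 0 = ((d+1)*x 0 - (d-1)*x 2)/(2*d) := rfl
private lemma Finv_apply_1 (d a b c e : ℚ) (x : Fin 21 → ℚ) : Finv d a b c e x 1 = ((d+1)*x 1 - (d-1)*x 3)/(2*d) := rfl
private lemma Finv_apply_2 (d a b c e : ℚ) (x : Fin 21 → ℚ) : Finv d a b c e x 2 = (-(d-1)*x 0 + (d+1)*x 2)/(2*d) := rfl
private lemma Finv_apply_3 (d a b c e : ℚ) (x : Fin 21 → ℚ) : Finv d a b c e x 3 = (-(d-1)*x 1 + (d+1)*x 3)/(2*d) := rfl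
private lemma Finv_apply_4 (d a b c e : ℚ) (x : Fin 21 → ℚ) : Finv d a b c e x 4 = (a*(x 4) + b*(x 5) + c*(x 6) + e*(x 7))/d := rfl
private lemma Finv_apply_5 (d a b c e : ℚ) (x : Fin 21 → ℚ) : Finv d a b c e x 5 = (a*(x 5) - b*(x 4) - c*(x 7) + e*(x 6))/d := rfl
private lemma Finv_apply_6 (d a b c e : ℚ) (x : Fin 21 → ℚ) : Finv d a b c e x 6 = (a*(x 6) + b*(x 7) - c*(x 4) - e*(x 5))/d := rfl
private lemma Finv_apply_7 (d a b c e : ℚ) (x : Fin 21 → ℚ) : Finv d a b c e x 7 = (a*(x 7) - b*(x 6) + c*(x 5) - e*(x 4))/d := rfl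
private lemma Finv_apply_8 (d a b c e : ℚ) (x : Fin 21 → ℚ) : Finv d a b c e x 8 = (a*(x 8) + b*(x 9) + c*(x 10) + e*(x 11))/d := rfl
private lemma Finv_apply_9 (d a b c e : ℚ) (x : Fin 21 → ℚ) : Finv d a b c e x 9 = (a*(x 9) - b*(x 8) - c*(x 11) + e*(x 10))/d := rfl
private lemma Finv_apply_10 (d a b c e : ℚ) (x : Fin 21 → ℚ) : Finv d a b c e x 10 = (a*(x 10) + b*(x 11) - c*(x 8) - e*(x 9))/d := rfl
private lemma Finv_apply_11 (d a b c e : ℚ) (x : Fin 21 → ℚ) : Finv d a b c e x 11 = (a*(x 11) - b*(x 10) + c*(x 9) - e*(x 8))/d := rfl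
private lemma Finv_apply_12 (d a b c e : ℚ) (x : Fin 21 → ℚ) : Finv d a b c e x 12 = (a*(x 12) + b*(x 13) + c*(x 14) + e*(x 15))/d := rfl
private lemma Finv_apply_13 (d a b c e : ℚ) (x : Fin 21 → ℚ) : Finv d a b c e x 13 = (a*(x 13) - b*(x 12) - c*(x 15) + e*(x 14))/d := rfl
private lemma Finv_apply_14 (d a b c e : ℚ) (x : Fin 21 → ℚ) : Finv d a b c e x 14 = (a*(x 14) + b*(x 15) - c*(x 12) - e*(x 13))/d := rfl
private lemma Finv_apply_15 (d a b c e : ℚ) (x : Fin 21 → ℚ) : Finv d a b c e x 15 = (a*(x 15) - b*(x 14) + c*(x 13) - e*(x 12))/d := rfl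
private lemma Finv_apply_16 (d a b c e : ℚ) (x : Fin 21 → ℚ) : Finv d a b c e x 16 = (a*(x 16) + b*(x 17) + c*(x 18) + e*(x 19))/d := rfl
private lemma Finv_apply_17 (d a b c e : ℚ) (x : Fin 21 → ℚ) : Finv d a b c e x 17 = (a*(x 17) - b*(x 16) - c*(x 19) + e*(x 18))/d := rfl
private lemma Finv_apply_18 (d a b c e : ℚ) (x : Fin 21 → ℚ) : Finv d a b c e x 18 = (a*(x 18) + b*(x 19) - c*(x 16) - e*(x 17))/d := rfl
private lemma Finv_apply_19 (d a b c e : ℚ) (x : Fin 21 → ℚ) : Finv d a b c e x 19 = (a*(x 19) - b*(x 18) + c*(x 17) - e*(x 16))/d := rfl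
private lemma Finv_apply_20 (d a b c e : ℚ) (x : Fin 21 → ℚ) : Finv d a b c e x 20 = x 20 := rfl

private lemma fwd_add (d a b c e : ℚ) (x y : Fin 21 → ℚ) :
    Fwd d a b c e (x + y) = Fwd d a b c e x + Fwd d a b c e y := by
  funext i
  fin_cases i <;> simp only [Pi.add_apply, finmk_0, finmk_1, finmk_2, finmk_3, finmk_4, finmk_5, finmk_6, finmk_7, finmk_8, finmk_9, finmk_10, finmk_11, finmk_12, finmk_13, finmk_14, finmk_15, finmk_16, finmk_17, finmk_18, finmk_19, finmk_20, Fwd_apply_0, Fwd_apply_1, Fwd_apply_2, Fwd_apply_3, Fwd_apply_4, Fwd_apply_5, Fwd_apply_6, Fwd_apply_7, Fwd_apply_8, Fwd_apply_9, Fwd_apply_10, Fwd_apply_11, Fwd_apply_12, Fwd_apply_13, Fwd_apply_14, Fwd_apply_15, Fwd_apply_16, Fwd_apply_17, Fwd_apply_18, Fwd_apply_19, Fwd_apply_20, Finv_apply_0, Finv_apply_1, Finv_apply_2, Finv_apply_3, Finv_apply_4, Finv_apply_5, Finv_apply_6, Finv_apply_7, Finv_apply_8, Finv_apply_9, Finv_apply_10,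 Finv_apply_11, Finv_apply_12, Finv_apply_13, Finv_apply_14, Finv_apply_15, Finv_apply_16, Finv_apply_17, Finv_apply_18, Finv_apply_19, Finv_apply_20] <;> ring

private lemma fwd_smul (d a b c e : ℚ) (m : ℚ) (x : Fin 21 → ℚ) :
    Fwd d a b c e (m • x) = m • Fwd d a b c e x := by
  funext i
  fin_cases i <;> simp only [Pi.smul_apply, smul_eq_mul, finmk_0, finmk_1, finmk_2, finmk_3, finmk_4, finmk_5, finmk_6, finmk_7, finmk_8, finmk_9, finmk_10, finmk_11, finmk_12, finmk_13, finmk_14, finmk_15, finmk_16, finmk_17, finmk_18, finmk_19, finmk_20, Fwd_apply_0, Fwd_apply_1, Fwd_apply_2, Fwd_apply_3, Fwd_apply_4, Fwd_apply_5, Fwd_apply_6, Fwd_apply_7, Fwd_apply_8, Fwd_apply_9, Fwd_apply_10, Fwd_apply_11, Fwd_apply_12, Fwd_apply_13, Fwd_apply_14, Fwd_apply_15, Fwd_apply_16, Fwd_apply_17, Fwd_apply_18, Fwd_apply_19, Fwd_apply_20, Finv_apply_0, Finv_apply_1, Finv_apply_2, Finv_apply_3, Finv_apply_4, Finv_apply_5,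 Finv_apply_6, Finv_apply_7, Finv_apply_8, Finv_apply_9, Finv_apply_10, Finv_apply_11, Finv_apply_12, Finv_apply_13, Finv_apply_14, Finv_apply_15, Finv_apply_16, Finv_apply_17, Finv_apply_18, Finv_apply_19, Finv_apply_20] <;> ring

set_option maxHeartbeats 1000000 in
private lemma finv_fwd (d a b c e : ℚ) (h' : a^2 + b^2 + c^2 + e^2 = d) (hd0 : d ≠ 0)
    (x : Fin 21 → ℚ) : Finv d a b c e (Fwd d a b c e x) = x := by
  funext i
  fin_cases i <;> simp only [finmk_0, finmk_1, finmk_2, finmk_3, finmk_4, finmk_5, finmk_6, finmk_7, finmk_8, finmk_9, finmk_10, finmk_11, finmk_12, finmk_13, finmk_14, finmk_15, finmk_16, finmk_17, finmk_18, finmk_19, finmk_20, Fwd_apply_0, Fwd_apply_1, Fwd_apply_2, Fwd_apply_3, Fwd_apply_4, Fwd_apply_5, Fwd_apply_6, Fwd_apply_7, Fwd_apply_8, Fwd_apply_9, Fwd_apply_10, Fwd_apply_11, Fwd_apply_12, Fwd_apply_13, Fwd_apply_14, Fwd_apply_15, Fwd_apply_16, Fwd_apply_17, Fwd_apply_18,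 Fwd_apply_19, Fwd_apply_20, Finv_apply_0, Finv_apply_1, Finv_apply_2, Finv_apply_3, Finv_apply_4, Finv_apply_5, Finv_apply_6, Finv_apply_7, Finv_apply_8, Finv_apply_9, Finv_apply_10, Finv_apply_11, Finv_apply_12, Finv_apply_13, Finv_apply_14, Finv_apply_15, Finv_apply_16, Finv_apply_17, Finv_apply_18, Finv_apply_19, Finv_apply_20] <;>
    (first
      | (field_simp; rw [← h']; ring)
      | (field_simp; ring)
      | rfl)

set_option maxHeartbeats 1000000 in
private lemma fwd_finv (d a b c e : ℚ) (h' : a^2 + b^2 + c^2 + e^2 = d) (hd0 : d ≠ 0)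
    (x : Fin 21 → ℚ) : Fwd d a b c e (Finv d a b c e x) = x := by
  funext i
  fin_cases i <;> simp only [finmk_0, finmk_1, finmk_2, finmk_3, finmk_4, finmk_5, finmk_6, finmk_7, finmk_8, finmk_9, finmk_10, finmk_11, finmk_12, finmk_13, finmk_14, finmk_15, finmk_16, finmk_17, finmk_18, finmk_19, finmk_20, Fwd_apply_0, Fwd_apply_1, Fwd_apply_2, Fwd_apply_3, Fwd_apply_4, Fwd_apply_5, Fwd_apply_6, Fwd_apply_7, Fwd_apply_8, Fwd_apply_9, Fwd_apply_10, Fwd_apply_11, Fwd_apply_12, Fwd_apply_13, Fwd_apply_14, Fwd_apply_15, Fwd_apply_16, Fwd_apply_17, Fwd_apply_18, Fwd_apply_19, Fwd_apply_20, Finv_apply_0, Finv_apply_1, Finv_apply_2, Finv_apply_3, Finv_apply_4, Finv_apply_5, Finv_apply_6, Finv_apply_7, Finv_apply_8, Finv_apply_9, Finv_apply_10, Finv_apply_11, Finv_apply_12, Finv_apply_13, Finv_apply_14, Finv_apply_15, Finv_apply_16, Finv_apply_17, Finv_apply_18, Finv_apply_19, Finv_apply_20] <;>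
    (first
      | (field_simp; rw [← h']; ring)
      | (field_simp; ring)
      | rfl)

private lemma sum_eval (x : Fin 21 → ℚ) :
    ∑ i ∈ Finset.univ.filter (fun i : Fin 21 => 2 ≤ i.val ∧ i.val ≤ 19), x i ^ 2 =
    x 2^2 + x 3^2 + x 4^2 + x 5^2 + x 6^2 + x 7^2 + x 8^2 + x 9^2 + x 10^2 + x 11^2 +
    x 12^2 + x 13^2 + x 14^2 + x 15^2 + x 16^2 + x 17^2 + x 18^2 + x 19^2 := by
  rw [show (Finset.univ.filter fun i : Fin 21 => 2 ≤ i.val ∧ i.val ≤ 19)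
      = ({2,3,4,5,6,7,8,9,10,11,12,13,14,15,16,17,18,19} : Finset (Fin 21)) by decide]
  simp [Finset.sum_insert, Finset.mem_insert]
  ring

private lemma main_id (d a b c e : ℚ) (h' : a^2 + b^2 + c^2 + e^2 = d)
    (x : Fin 21 → ℚ) : Qd d (Fwd d a b c e x) = d * Qd 1 x := by
  rw [Qd, Qd, sum_eval, sum_eval, Fwd_apply_0, Fwd_apply_1, Fwd_apply_2, Fwd_apply_3, Fwd_apply_4, Fwd_apply_5, Fwd_apply_6, Fwd_apply_7, Fwd_apply_8, Fwd_apply_9, Fwd_apply_10, Fwd_apply_11, Fwd_apply_12, Fwd_apply_13, Fwd_apply_14, Fwd_apply_15, Fwd_apply_16, Fwd_apply_17, Fwd_apply_18, Fwd_apply_19, Fwd_apply_20]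
  rw [← h']
  ring

/-- For every squarefree positive integer `d`, the quadratic forms `d·Q₁` and `Q_d`
on `ℚ²¹` are equivalent over `ℚ`. -/
theorem dQ1_equiv_Qd (d : ℕ) (hd : 0 < d) (hsf : Squarefree d) :
    ∃ g : (Fin 21 → ℚ) ≃ₗ[ℚ] (Fin 21 → ℚ),
      ∀ x : Fin 21 → ℚ, Qd d (g x) = d * Qd 1 x := by
  obtain ⟨a, b, c, e, h⟩ := Nat.sum_four_squares d
  have h' : (a:ℚ)^2 + (b:ℚ)^2 + (c:ℚ)^2 + (e:ℚ)^2 = (d:ℚ) := by exact_mod_cast h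
  have hd0 : (d:ℚ) ≠ 0 := by positivity
  refine ⟨{ toFun := Fwd (d:ℚ) a b c e
            map_add' := fwd_add (d:ℚ) a b c e
            map_smul' := fun m x => (fwd_smul (d:ℚ) a b c e m x)
            invFun := Finv (d:ℚ) a b c e
            left_inv := finv_fwd (d:ℚ) a b c e h' hd0
            right_inv := fwd_finv (d:ℚ) a b c e h' hd0 }, ?_⟩
  intro x
  exact main_id (d:ℚ) a b c e h' x
end

section
/- For every squarefree positive integer d, the groups SO(Q₁)(ℚ) and SO(Q_d)(ℚ) are isomorphic as groups. -/
/-- Endomorphisms of `ℚ²¹`. -/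
abbrev End21 : Type := (Fin 21 → ℚ) →ₗ[ℚ] (Fin 21 → ℚ)

/-- `SO(Q_d)(ℚ)`: the group of `ℚ`-linear automorphisms of `ℚ²¹` of determinant `1`
preserving the quadratic form `Q_d`, as a subgroup of the general linear group. -/
def SOQ (d : ℚ) : Subgroup (LinearMap.GeneralLinearGroup ℚ (Fin 21 → ℚ)) where
  carrier := {g | LinearMap.det (g.val : End21) = 1 ∧
      ∀ x : Fin 21 → ℚ, Qd d ((g.val : End21) x) = Qd d x}
  one_mem' := by
    refine ⟨by simp [Units.val_one], fun x => ?_⟩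
    simp [Units.val_one]
  mul_mem' := by
    rintro a b ⟨ha1, ha2⟩ ⟨hb1, hb2⟩
    refine ⟨?_, fun x => ?_⟩
    · rw [Units.val_mul, map_mul, ha1, hb1, mul_one]
    · rw [Units.val_mul, Module.End.mul_apply, ha2, hb2]
  inv_mem' := by
    rintro a ⟨ha1, ha2⟩
    refine ⟨?_, fun x => ?_⟩
    · have h : LinearMap.det ((a⁻¹.val : End21) * (a.val : End21)) = 1 := by
        rw [a.inv_mul]; exact map_one _
      rwa [map_mul, ha1, mul_one] at h
    · have hx : (a.val : End21) ((a⁻¹.val : End21) x) = x := by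
        rw [← Module.End.mul_apply, a.mul_inv, Module.End.one_apply]
      calc Qd d ((a⁻¹.val : End21) x)
          = Qd d ((a.val : End21) ((a⁻¹.val : End21) x)) := (ha2 _).symm
        _ = Qd d x := by rw [hx]

noncomputable def pr21 (j : Fin 21) : (Fin 21 → ℚ) →ₗ[ℚ] ℚ := LinearMap.proj j

noncomputable def rA0 (a b c e : ℚ) : (Fin 21 → ℚ) →ₗ[ℚ] ℚ := (((a^2+b^2+c^2+e^2+1)/2)) • pr21 0 + (((a^2+b^2+c^2+e^2-1)/2)) • pr21 2

noncomputable def rA1 (a b c e : ℚ) : (Fin 21 → ℚ) →ₗ[ℚ] ℚ := (((a^2+b^2+c^2+e^2+1)/2)) • pr21 1 + (((a^2+b^2+c^2+e^2-1)/2)) • pr21 3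

noncomputable def rA2 (a b c e : ℚ) : (Fin 21 → ℚ) →ₗ[ℚ] ℚ := (((a^2+b^2+c^2+e^2-1)/2)) • pr21 0 + (((a^2+b^2+c^2+e^2+1)/2)) • pr21 2

noncomputable def rA3 (a b c e : ℚ) : (Fin 21 → ℚ) →ₗ[ℚ] ℚ := (((a^2+b^2+c^2+e^2-1)/2)) • pr21 1 + (((a^2+b^2+c^2+e^2+1)/2)) • pr21 3

noncomputable def rA4 (a b c e : ℚ) : (Fin 21 → ℚ) →ₗ[ℚ] ℚ := (a) • pr21 4 + (-b) • pr21 5 + (-c) • pr21 6 + (-e) • pr21 7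

noncomputable def rA5 (a b c e : ℚ) : (Fin 21 → ℚ) →ₗ[ℚ] ℚ := (b) • pr21 4 + (a) • pr21 5 + (-e) • pr21 6 + (c) • pr21 7

noncomputable def rA6 (a b c e : ℚ) : (Fin 21 → ℚ) →ₗ[ℚ] ℚ := (c) • pr21 4 + (e) • pr21 5 + (a) • pr21 6 + (-b) • pr21 7

noncomputable def rA7 (a b c e : ℚ) : (Fin 21 → ℚ) →ₗ[ℚ] ℚ := (e) • pr21 4 + (-c) • pr21 5 + (b) • pr21 6 + (a) • pr21 7

noncomputable def rA8 (a b c e : ℚ) : (Fin 21 → ℚ) →ₗ[ℚ] ℚ := (a) • pr21 8 + (-b) • pr21 9 + (-c) • pr21 10 + (-e) • pr21 11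

noncomputable def rA9 (a b c e : ℚ) : (Fin 21 → ℚ) →ₗ[ℚ] ℚ := (b) • pr21 8 + (a) • pr21 9 + (-e) • pr21 10 + (c) • pr21 11

noncomputable def rA10 (a b c e : ℚ) : (Fin 21 → ℚ) →ₗ[ℚ] ℚ := (c) • pr21 8 + (e) • pr21 9 + (a) • pr21 10 + (-b) • pr21 11

noncomputable def rA11 (a b c e : ℚ) : (Fin 21 → ℚ) →ₗ[ℚ] ℚ := (e) • pr21 8 + (-c) • pr21 9 + (b) • pr21 10 + (a) • pr21 11

noncomputable def rA12 (a b c e : ℚ) : (Fin 21 → ℚ) →ₗ[ℚ] ℚ := (a) • pr21 12 + (-b) • pr21 13 + (-c) • pr21 14 + (-e) • pr21 15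

noncomputable def rA13 (a b c e : ℚ) : (Fin 21 → ℚ) →ₗ[ℚ] ℚ := (b) • pr21 12 + (a) • pr21 13 + (-e) • pr21 14 + (c) • pr21 15

noncomputable def rA14 (a b c e : ℚ) : (Fin 21 → ℚ) →ₗ[ℚ] ℚ := (c) • pr21 12 + (e) • pr21 13 + (a) • pr21 14 + (-b) • pr21 15

noncomputable def rA15 (a b c e : ℚ) : (Fin 21 → ℚ) →ₗ[ℚ] ℚ := (e) • pr21 12 + (-c) • pr21 13 + (b) • pr21 14 + (a) • pr21 15

noncomputable def rA16 (a b c e : ℚ) : (Fin 21 → ℚ) →ₗ[ℚ] ℚ := (a) • pr21 16 + (-b) • pr21 17 + (-c) • pr21 18 + (-e) • pr21 19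

noncomputable def rA17 (a b c e : ℚ) : (Fin 21 → ℚ) →ₗ[ℚ] ℚ := (b) • pr21 16 + (a) • pr21 17 + (-e) • pr21 18 + (c) • pr21 19

noncomputable def rA18 (a b c e : ℚ) : (Fin 21 → ℚ) →ₗ[ℚ] ℚ := (c) • pr21 16 + (e) • pr21 17 + (a) • pr21 18 + (-b) • pr21 19

noncomputable def rA19 (a b c e : ℚ) : (Fin 21 → ℚ) →ₗ[ℚ] ℚ := (e) • pr21 16 + (-c) • pr21 17 + (b) • pr21 18 + (a) • pr21 19

noncomputable def rA20 (a b c e : ℚ) : (Fin 21 → ℚ) →ₗ[ℚ] ℚ := ((1:ℚ)) • pr21 20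

noncomputable def mapA (a b c e : ℚ) : End21 := LinearMap.pi ![rA0 a b c e, rA1 a b c e, rA2 a b c e, rA3 a b c e, rA4 a b c e, rA5 a b c e, rA6 a b c e, rA7 a b c e, rA8 a b c e, rA9 a b c e, rA10 a b c e, rA11 a b c e, rA12 a b c e, rA13 a b c e, rA14 a b c e, rA15 a b c e, rA16 a b c e, rA17 a b c e, rA18 a b c e, rA19 a b c e, rA20 a b c e]

noncomputable def rB0 (a b c e : ℚ) : (Fin 21 → ℚ) →ₗ[ℚ] ℚ := (((a^2+b^2+c^2+e^2+1)/2)) • pr21 0 + (-((a^2+b^2+c^2+e^2-1)/2)) • pr21 2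

noncomputable def rB1 (a b c e : ℚ) : (Fin 21 → ℚ) →ₗ[ℚ] ℚ := (((a^2+b^2+c^2+e^2+1)/2)) • pr21 1 + (-((a^2+b^2+c^2+e^2-1)/2)) • pr21 3

noncomputable def rB2 (a b c e : ℚ) : (Fin 21 → ℚ) →ₗ[ℚ] ℚ := (-((a^2+b^2+c^2+e^2-1)/2)) • pr21 0 + (((a^2+b^2+c^2+e^2+1)/2)) • pr21 2

noncomputable def rB3 (a b c e : ℚ) : (Fin 21 → ℚ) →ₗ[ℚ] ℚ := (-((a^2+b^2+c^2+e^2-1)/2)) • pr21 1 + (((a^2+b^2+c^2+e^2+1)/2)) • pr21 3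

noncomputable def rB4 (a b c e : ℚ) : (Fin 21 → ℚ) →ₗ[ℚ] ℚ := (a) • pr21 4 + (b) • pr21 5 + (c) • pr21 6 + (e) • pr21 7

noncomputable def rB5 (a b c e : ℚ) : (Fin 21 → ℚ) →ₗ[ℚ] ℚ := (-b) • pr21 4 + (a) • pr21 5 + (e) • pr21 6 + (-c) • pr21 7

noncomputable def rB6 (a b c e : ℚ) : (Fin 21 → ℚ) →ₗ[ℚ] ℚ := (-c) • pr21 4 + (-e) • pr21 5 + (a) • pr21 6 + (b) • pr21 7

noncomputable def rB7 (a b c e : ℚ) : (Fin 21 → ℚ) →ₗ[ℚ] ℚ := (-e) • pr21 4 + (c) • pr21 5 + (-b) • pr21 6 + (a) • pr21 7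

noncomputable def rB8 (a b c e : ℚ) : (Fin 21 → ℚ) →ₗ[ℚ] ℚ := (a) • pr21 8 + (b) • pr21 9 + (c) • pr21 10 + (e) • pr21 11

noncomputable def rB9 (a b c e : ℚ) : (Fin 21 → ℚ) →ₗ[ℚ] ℚ := (-b) • pr21 8 + (a) • pr21 9 + (e) • pr21 10 + (-c) • pr21 11

noncomputable def rB10 (a b c e : ℚ) : (Fin 21 → ℚ) →ₗ[ℚ] ℚ := (-c) • pr21 8 + (-e) • pr21 9 + (a) • pr21 10 + (b) • pr21 11

noncomputable def rB11 (a b c e : ℚ) : (Fin 21 → ℚ) →ₗ[ℚ] ℚ := (-e) • pr21 8 + (c) • pr21 9 + (-b) • pr21 10 + (a) • pr21 11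

noncomputable def rB12 (a b c e : ℚ) : (Fin 21 → ℚ) →ₗ[ℚ] ℚ := (a) • pr21 12 + (b) • pr21 13 + (c) • pr21 14 + (e) • pr21 15

noncomputable def rB13 (a b c e : ℚ) : (Fin 21 → ℚ) →ₗ[ℚ] ℚ := (-b) • pr21 12 + (a) • pr21 13 + (e) • pr21 14 + (-c) • pr21 15

noncomputable def rB14 (a b c e : ℚ) : (Fin 21 → ℚ) →ₗ[ℚ] ℚ := (-c) • pr21 12 + (-e) • pr21 13 + (a) • pr21 14 + (b) • pr21 15

noncomputable def rB15 (a b c e : ℚ) : (Fin 21 → ℚ) →ₗ[ℚ] ℚ := (-e) • pr21 12 + (c) • pr21 13 + (-b) • pr21 14 + (a) • pr21 15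

noncomputable def rB16 (a b c e : ℚ) : (Fin 21 → ℚ) →ₗ[ℚ] ℚ := (a) • pr21 16 + (b) • pr21 17 + (c) • pr21 18 + (e) • pr21 19

noncomputable def rB17 (a b c e : ℚ) : (Fin 21 → ℚ) →ₗ[ℚ] ℚ := (-b) • pr21 16 + (a) • pr21 17 + (e) • pr21 18 + (-c) • pr21 19

noncomputable def rB18 (a b c e : ℚ) : (Fin 21 → ℚ) →ₗ[ℚ] ℚ := (-c) • pr21 16 + (-e) • pr21 17 + (a) • pr21 18 + (b) • pr21 19

noncomputable def rB19 (a b c e : ℚ) : (Fin 21 → ℚ) →ₗ[ℚ] ℚ := (-e) • pr21 16 + (c) • pr21 17 + (-b) • pr21 18 + (a) • pr21 19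

noncomputable def rB20 (a b c e : ℚ) : (Fin 21 → ℚ) →ₗ[ℚ] ℚ := ((a^2+b^2+c^2+e^2)) • pr21 20

noncomputable def mapB (a b c e : ℚ) : End21 := LinearMap.pi ![rB0 a b c e, rB1 a b c e, rB2 a b c e, rB3 a b c e, rB4 a b c e, rB5 a b c e, rB6 a b c e, rB7 a b c e, rB8 a b c e, rB9 a b c e, rB10 a b c e, rB11 a b c e, rB12 a b c e, rB13 a b c e, rB14 a b c e, rB15 a b c e, rB16 a b c e, rB17 a b c e, rB18 a b c e, rB19 a b c e, rB20 a b c e]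

@[simp] lemma finsucc_1_0 : Fin.succ ((0 : Fin 1)) = ((1) : Fin 2) := rfl

@[simp] lemma finsucc_2_0 : Fin.succ ((0 : Fin 2)) = ((1) : Fin 3) := rfl

@[simp] lemma finsucc_2_1 : Fin.succ ((1 : Fin 2)) = ((2) : Fin 3) := rfl

@[simp] lemma finsucc_3_0 : Fin.succ ((0 : Fin 3)) = ((1) : Fin 4) := rfl

@[simp] lemma finsucc_3_1 : Fin.succ ((1 : Fin 3)) = ((2) : Fin 4) := rfl

@[simp] lemma finsucc_3_2 : Fin.succ ((2 : Fin 3)) = ((3) : Fin 4) := rfl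

@[simp] lemma finsucc_4_0 : Fin.succ ((0 : Fin 4)) = ((1) : Fin 5) := rfl

@[simp] lemma finsucc_4_1 : Fin.succ ((1 : Fin 4)) = ((2) : Fin 5) := rfl

@[simp] lemma finsucc_4_2 : Fin.succ ((2 : Fin 4)) = ((3) : Fin 5) := rfl

@[simp] lemma finsucc_4_3 : Fin.succ ((3 : Fin 4)) = ((4) : Fin 5) := rfl

@[simp] lemma finsucc_5_0 : Fin.succ ((0 : Fin 5)) = ((1) : Fin 6) := rfl

@[simp] lemma finsucc_5_1 : Fin.succ ((1 : Fin 5)) = ((2) : Fin 6) := rfl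

@[simp] lemma finsucc_5_2 : Fin.succ ((2 : Fin 5)) = ((3) : Fin 6) := rfl

@[simp] lemma finsucc_5_3 : Fin.succ ((3 : Fin 5)) = ((4) : Fin 6) := rfl

@[simp] lemma finsucc_5_4 : Fin.succ ((4 : Fin 5)) = ((5) : Fin 6) := rfl

@[simp] lemma finsucc_6_0 : Fin.succ ((0 : Fin 6)) = ((1) : Fin 7) := rfl

@[simp] lemma finsucc_6_1 : Fin.succ ((1 : Fin 6)) = ((2) : Fin 7) := rfl

@[simp] lemma finsucc_6_2 : Fin.succ ((2 : Fin 6)) = ((3) : Fin 7) := rfl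

@[simp] lemma finsucc_6_3 : Fin.succ ((3 : Fin 6)) = ((4) : Fin 7) := rfl

@[simp] lemma finsucc_6_4 : Fin.succ ((4 : Fin 6)) = ((5) : Fin 7) := rfl

@[simp] lemma finsucc_6_5 : Fin.succ ((5 : Fin 6)) = ((6) : Fin 7) := rfl

@[simp] lemma finsucc_7_0 : Fin.succ ((0 : Fin 7)) = ((1) : Fin 8) := rfl

@[simp] lemma finsucc_7_1 : Fin.succ ((1 : Fin 7)) = ((2) : Fin 8) := rfl

@[simp] lemma finsucc_7_2 : Fin.succ ((2 : Fin 7)) = ((3) : Fin 8) := rfl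

@[simp] lemma finsucc_7_3 : Fin.succ ((3 : Fin 7)) = ((4) : Fin 8) := rfl

@[simp] lemma finsucc_7_4 : Fin.succ ((4 : Fin 7)) = ((5) : Fin 8) := rfl

@[simp] lemma finsucc_7_5 : Fin.succ ((5 : Fin 7)) = ((6) : Fin 8) := rfl

@[simp] lemma finsucc_7_6 : Fin.succ ((6 : Fin 7)) = ((7) : Fin 8) := rfl

@[simp] lemma finsucc_8_0 : Fin.succ ((0 : Fin 8)) = ((1) : Fin 9) := rfl

@[simp] lemma finsucc_8_1 : Fin.succ ((1 : Fin 8)) = ((2) : Fin 9) := rfl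

@[simp] lemma finsucc_8_2 : Fin.succ ((2 : Fin 8)) = ((3) : Fin 9) := rfl

@[simp] lemma finsucc_8_3 : Fin.succ ((3 : Fin 8)) = ((4) : Fin 9) := rfl

@[simp] lemma finsucc_8_4 : Fin.succ ((4 : Fin 8)) = ((5) : Fin 9) := rfl

@[simp] lemma finsucc_8_5 : Fin.succ ((5 : Fin 8)) = ((6) : Fin 9) := rfl

@[simp] lemma finsucc_8_6 : Fin.succ ((6 : Fin 8)) = ((7) : Fin 9) := rfl

@[simp] lemma finsucc_8_7 : Fin.succ ((7 : Fin 8)) = ((8) : Fin 9) := rfl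

@[simp] lemma finsucc_9_0 : Fin.succ ((0 : Fin 9)) = ((1) : Fin 10) := rfl

@[simp] lemma finsucc_9_1 : Fin.succ ((1 : Fin 9)) = ((2) : Fin 10) := rfl

@[simp] lemma finsucc_9_2 : Fin.succ ((2 : Fin 9)) = ((3) : Fin 10) := rfl

@[simp] lemma finsucc_9_3 : Fin.succ ((3 : Fin 9)) = ((4) : Fin 10) := rfl

@[simp] lemma finsucc_9_4 : Fin.succ ((4 : Fin 9)) = ((5) : Fin 10) := rfl

@[simp] lemma finsucc_9_5 : Fin.succ ((5 : Fin 9)) = ((6) : Fin 10) := rfl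

@[simp] lemma finsucc_9_6 : Fin.succ ((6 : Fin 9)) = ((7) : Fin 10) := rfl

@[simp] lemma finsucc_9_7 : Fin.succ ((7 : Fin 9)) = ((8) : Fin 10) := rfl

@[simp] lemma finsucc_9_8 : Fin.succ ((8 : Fin 9)) = ((9) : Fin 10) := rfl

@[simp] lemma finsucc_10_0 : Fin.succ ((0 : Fin 10)) = ((1) : Fin 11) := rfl

@[simp] lemma finsucc_10_1 : Fin.succ ((1 : Fin 10)) = ((2) : Fin 11) := rfl

@[simp] lemma finsucc_10_2 : Fin.succ ((2 : Fin 10)) = ((3) : Fin 11) := rfl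

@[simp] lemma finsucc_10_3 : Fin.succ ((3 : Fin 10)) = ((4) : Fin 11) := rfl

@[simp] lemma finsucc_10_4 : Fin.succ ((4 : Fin 10)) = ((5) : Fin 11) := rfl

@[simp] lemma finsucc_10_5 : Fin.succ ((5 : Fin 10)) = ((6) : Fin 11) := rfl

@[simp] lemma finsucc_10_6 : Fin.succ ((6 : Fin 10)) = ((7) : Fin 11) := rfl

@[simp] lemma finsucc_10_7 : Fin.succ ((7 : Fin 10)) = ((8) : Fin 11) := rfl

@[simp] lemma finsucc_10_8 : Fin.succ ((8 : Fin 10)) = ((9) : Fin 11) := rfl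

@[simp] lemma finsucc_10_9 : Fin.succ ((9 : Fin 10)) = ((10) : Fin 11) := rfl

@[simp] lemma finsucc_11_0 : Fin.succ ((0 : Fin 11)) = ((1) : Fin 12) := rfl

@[simp] lemma finsucc_11_1 : Fin.succ ((1 : Fin 11)) = ((2) : Fin 12) := rfl

@[simp] lemma finsucc_11_2 : Fin.succ ((2 : Fin 11)) = ((3) : Fin 12) := rfl

@[simp] lemma finsucc_11_3 : Fin.succ ((3 : Fin 11)) = ((4) : Fin 12) := rfl

@[simp] lemma finsucc_11_4 : Fin.succ ((4 : Fin 11)) = ((5) : Fin 12) := rfl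

@[simp] lemma finsucc_11_5 : Fin.succ ((5 : Fin 11)) = ((6) : Fin 12) := rfl

@[simp] lemma finsucc_11_6 : Fin.succ ((6 : Fin 11)) = ((7) : Fin 12) := rfl

@[simp] lemma finsucc_11_7 : Fin.succ ((7 : Fin 11)) = ((8) : Fin 12) := rfl

@[simp] lemma finsucc_11_8 : Fin.succ ((8 : Fin 11)) = ((9) : Fin 12) := rfl

@[simp] lemma finsucc_11_9 : Fin.succ ((9 : Fin 11)) = ((10) : Fin 12) := rfl

@[simp] lemma finsucc_11_10 : Fin.succ ((10 : Fin 11)) = ((11) : Fin 12) := rfl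

@[simp] lemma finsucc_12_0 : Fin.succ ((0 : Fin 12)) = ((1) : Fin 13) := rfl

@[simp] lemma finsucc_12_1 : Fin.succ ((1 : Fin 12)) = ((2) : Fin 13) := rfl

@[simp] lemma finsucc_12_2 : Fin.succ ((2 : Fin 12)) = ((3) : Fin 13) := rfl

@[simp] lemma finsucc_12_3 : Fin.succ ((3 : Fin 12)) = ((4) : Fin 13) := rfl

@[simp] lemma finsucc_12_4 : Fin.succ ((4 : Fin 12)) = ((5) : Fin 13) := rfl

@[simp] lemma finsucc_12_5 : Fin.succ ((5 : Fin 12)) = ((6) : Fin 13) := rfl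

@[simp] lemma finsucc_12_6 : Fin.succ ((6 : Fin 12)) = ((7) : Fin 13) := rfl

@[simp] lemma finsucc_12_7 : Fin.succ ((7 : Fin 12)) = ((8) : Fin 13) := rfl

@[simp] lemma finsucc_12_8 : Fin.succ ((8 : Fin 12)) = ((9) : Fin 13) := rfl

@[simp] lemma finsucc_12_9 : Fin.succ ((9 : Fin 12)) = ((10) : Fin 13) := rfl

@[simp] lemma finsucc_12_10 : Fin.succ ((10 : Fin 12)) = ((11) : Fin 13) := rfl

@[simp] lemma finsucc_12_11 : Fin.succ ((11 : Fin 12)) = ((12) : Fin 13) := rfl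

@[simp] lemma finsucc_13_0 : Fin.succ ((0 : Fin 13)) = ((1) : Fin 14) := rfl

@[simp] lemma finsucc_13_1 : Fin.succ ((1 : Fin 13)) = ((2) : Fin 14) := rfl

@[simp] lemma finsucc_13_2 : Fin.succ ((2 : Fin 13)) = ((3) : Fin 14) := rfl

@[simp] lemma finsucc_13_3 : Fin.succ ((3 : Fin 13)) = ((4) : Fin 14) := rfl

@[simp] lemma finsucc_13_4 : Fin.succ ((4 : Fin 13)) = ((5) : Fin 14) := rfl

@[simp] lemma finsucc_13_5 : Fin.succ ((5 : Fin 13)) = ((6) : Fin 14) := rfl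

@[simp] lemma finsucc_13_6 : Fin.succ ((6 : Fin 13)) = ((7) : Fin 14) := rfl

@[simp] lemma finsucc_13_7 : Fin.succ ((7 : Fin 13)) = ((8) : Fin 14) := rfl

@[simp] lemma finsucc_13_8 : Fin.succ ((8 : Fin 13)) = ((9) : Fin 14) := rfl

@[simp] lemma finsucc_13_9 : Fin.succ ((9 : Fin 13)) = ((10) : Fin 14) := rfl

@[simp] lemma finsucc_13_10 : Fin.succ ((10 : Fin 13)) = ((11) : Fin 14) := rfl

@[simp] lemma finsucc_13_11 : Fin.succ ((11 : Fin 13)) = ((12) : Fin 14) := rfl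

@[simp] lemma finsucc_13_12 : Fin.succ ((12 : Fin 13)) = ((13) : Fin 14) := rfl

@[simp] lemma finsucc_14_0 : Fin.succ ((0 : Fin 14)) = ((1) : Fin 15) := rfl

@[simp] lemma finsucc_14_1 : Fin.succ ((1 : Fin 14)) = ((2) : Fin 15) := rfl

@[simp] lemma finsucc_14_2 : Fin.succ ((2 : Fin 14)) = ((3) : Fin 15) := rfl

@[simp] lemma finsucc_14_3 : Fin.succ ((3 : Fin 14)) = ((4) : Fin 15) := rfl

@[simp] lemma finsucc_14_4 : Fin.succ ((4 : Fin 14)) = ((5) : Fin 15) := rfl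

@[simp] lemma finsucc_14_5 : Fin.succ ((5 : Fin 14)) = ((6) : Fin 15) := rfl

@[simp] lemma finsucc_14_6 : Fin.succ ((6 : Fin 14)) = ((7) : Fin 15) := rfl

@[simp] lemma finsucc_14_7 : Fin.succ ((7 : Fin 14)) = ((8) : Fin 15) := rfl

@[simp] lemma finsucc_14_8 : Fin.succ ((8 : Fin 14)) = ((9) : Fin 15) := rfl

@[simp] lemma finsucc_14_9 : Fin.succ ((9 : Fin 14)) = ((10) : Fin 15) := rfl

@[simp] lemma finsucc_14_10 : Fin.succ ((10 : Fin 14)) = ((11) : Fin 15) := rfl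

@[simp] lemma finsucc_14_11 : Fin.succ ((11 : Fin 14)) = ((12) : Fin 15) := rfl

@[simp] lemma finsucc_14_12 : Fin.succ ((12 : Fin 14)) = ((13) : Fin 15) := rfl

@[simp] lemma finsucc_14_13 : Fin.succ ((13 : Fin 14)) = ((14) : Fin 15) := rfl

@[simp] lemma finsucc_15_0 : Fin.succ ((0 : Fin 15)) = ((1) : Fin 16) := rfl

@[simp] lemma finsucc_15_1 : Fin.succ ((1 : Fin 15)) = ((2) : Fin 16) := rfl

@[simp] lemma finsucc_15_2 : Fin.succ ((2 : Fin 15)) = ((3) : Fin 16) := rfl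

@[simp] lemma finsucc_15_3 : Fin.succ ((3 : Fin 15)) = ((4) : Fin 16) := rfl

@[simp] lemma finsucc_15_4 : Fin.succ ((4 : Fin 15)) = ((5) : Fin 16) := rfl

@[simp] lemma finsucc_15_5 : Fin.succ ((5 : Fin 15)) = ((6) : Fin 16) := rfl

@[simp] lemma finsucc_15_6 : Fin.succ ((6 : Fin 15)) = ((7) : Fin 16) := rfl

@[simp] lemma finsucc_15_7 : Fin.succ ((7 : Fin 15)) = ((8) : Fin 16) := rfl

@[simp] lemma finsucc_15_8 : Fin.succ ((8 : Fin 15)) = ((9) : Fin 16) := rfl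

@[simp] lemma finsucc_15_9 : Fin.succ ((9 : Fin 15)) = ((10) : Fin 16) := rfl

@[simp] lemma finsucc_15_10 : Fin.succ ((10 : Fin 15)) = ((11) : Fin 16) := rfl

@[simp] lemma finsucc_15_11 : Fin.succ ((11 : Fin 15)) = ((12) : Fin 16) := rfl

@[simp] lemma finsucc_15_12 : Fin.succ ((12 : Fin 15)) = ((13) : Fin 16) := rfl

@[simp] lemma finsucc_15_13 : Fin.succ ((13 : Fin 15)) = ((14) : Fin 16) := rfl

@[simp] lemma finsucc_15_14 : Fin.succ ((14 : Fin 15)) = ((15) : Fin 16) := rfl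

@[simp] lemma finsucc_16_0 : Fin.succ ((0 : Fin 16)) = ((1) : Fin 17) := rfl

@[simp] lemma finsucc_16_1 : Fin.succ ((1 : Fin 16)) = ((2) : Fin 17) := rfl

@[simp] lemma finsucc_16_2 : Fin.succ ((2 : Fin 16)) = ((3) : Fin 17) := rfl

@[simp] lemma finsucc_16_3 : Fin.succ ((3 : Fin 16)) = ((4) : Fin 17) := rfl

@[simp] lemma finsucc_16_4 : Fin.succ ((4 : Fin 16)) = ((5) : Fin 17) := rfl

@[simp] lemma finsucc_16_5 : Fin.succ ((5 : Fin 16)) = ((6) : Fin 17) := rfl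

@[simp] lemma finsucc_16_6 : Fin.succ ((6 : Fin 16)) = ((7) : Fin 17) := rfl

@[simp] lemma finsucc_16_7 : Fin.succ ((7 : Fin 16)) = ((8) : Fin 17) := rfl

@[simp] lemma finsucc_16_8 : Fin.succ ((8 : Fin 16)) = ((9) : Fin 17) := rfl

@[simp] lemma finsucc_16_9 : Fin.succ ((9 : Fin 16)) = ((10) : Fin 17) := rfl

@[simp] lemma finsucc_16_10 : Fin.succ ((10 : Fin 16)) = ((11) : Fin 17) := rfl

@[simp] lemma finsucc_16_11 : Fin.succ ((11 : Fin 16)) = ((12) : Fin 17) := rfl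

@[simp] lemma finsucc_16_12 : Fin.succ ((12 : Fin 16)) = ((13) : Fin 17) := rfl

@[simp] lemma finsucc_16_13 : Fin.succ ((13 : Fin 16)) = ((14) : Fin 17) := rfl

@[simp] lemma finsucc_16_14 : Fin.succ ((14 : Fin 16)) = ((15) : Fin 17) := rfl

@[simp] lemma finsucc_16_15 : Fin.succ ((15 : Fin 16)) = ((16) : Fin 17) := rfl

@[simp] lemma finsucc_17_0 : Fin.succ ((0 : Fin 17)) = ((1) : Fin 18) := rfl

@[simp] lemma finsucc_17_1 : Fin.succ ((1 : Fin 17)) = ((2) : Fin 18) := rfl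

@[simp] lemma finsucc_17_2 : Fin.succ ((2 : Fin 17)) = ((3) : Fin 18) := rfl

@[simp] lemma finsucc_17_3 : Fin.succ ((3 : Fin 17)) = ((4) : Fin 18) := rfl

@[simp] lemma finsucc_17_4 : Fin.succ ((4 : Fin 17)) = ((5) : Fin 18) := rfl

@[simp] lemma finsucc_17_5 : Fin.succ ((5 : Fin 17)) = ((6) : Fin 18) := rfl

@[simp] lemma finsucc_17_6 : Fin.succ ((6 : Fin 17)) = ((7) : Fin 18) := rfl

@[simp] lemma finsucc_17_7 : Fin.succ ((7 : Fin 17)) = ((8) : Fin 18) := rfl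

@[simp] lemma finsucc_17_8 : Fin.succ ((8 : Fin 17)) = ((9) : Fin 18) := rfl

@[simp] lemma finsucc_17_9 : Fin.succ ((9 : Fin 17)) = ((10) : Fin 18) := rfl

@[simp] lemma finsucc_17_10 : Fin.succ ((10 : Fin 17)) = ((11) : Fin 18) := rfl

@[simp] lemma finsucc_17_11 : Fin.succ ((11 : Fin 17)) = ((12) : Fin 18) := rfl

@[simp] lemma finsucc_17_12 : Fin.succ ((12 : Fin 17)) = ((13) : Fin 18) := rfl

@[simp] lemma finsucc_17_13 : Fin.succ ((13 : Fin 17)) = ((14) : Fin 18) := rfl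

@[simp] lemma finsucc_17_14 : Fin.succ ((14 : Fin 17)) = ((15) : Fin 18) := rfl

@[simp] lemma finsucc_17_15 : Fin.succ ((15 : Fin 17)) = ((16) : Fin 18) := rfl

@[simp] lemma finsucc_17_16 : Fin.succ ((16 : Fin 17)) = ((17) : Fin 18) := rfl

@[simp] lemma finsucc_18_0 : Fin.succ ((0 : Fin 18)) = ((1) : Fin 19) := rfl

@[simp] lemma finsucc_18_1 : Fin.succ ((1 : Fin 18)) = ((2) : Fin 19) := rfl

@[simp] lemma finsucc_18_2 : Fin.succ ((2 : Fin 18)) = ((3) : Fin 19) := rfl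

@[simp] lemma finsucc_18_3 : Fin.succ ((3 : Fin 18)) = ((4) : Fin 19) := rfl

@[simp] lemma finsucc_18_4 : Fin.succ ((4 : Fin 18)) = ((5) : Fin 19) := rfl

@[simp] lemma finsucc_18_5 : Fin.succ ((5 : Fin 18)) = ((6) : Fin 19) := rfl

@[simp] lemma finsucc_18_6 : Fin.succ ((6 : Fin 18)) = ((7) : Fin 19) := rfl

@[simp] lemma finsucc_18_7 : Fin.succ ((7 : Fin 18)) = ((8) : Fin 19) := rfl

@[simp] lemma finsucc_18_8 : Fin.succ ((8 : Fin 18)) = ((9) : Fin 19) := rfl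

@[simp] lemma finsucc_18_9 : Fin.succ ((9 : Fin 18)) = ((10) : Fin 19) := rfl

@[simp] lemma finsucc_18_10 : Fin.succ ((10 : Fin 18)) = ((11) : Fin 19) := rfl

@[simp] lemma finsucc_18_11 : Fin.succ ((11 : Fin 18)) = ((12) : Fin 19) := rfl

@[simp] lemma finsucc_18_12 : Fin.succ ((12 : Fin 18)) = ((13) : Fin 19) := rfl

@[simp] lemma finsucc_18_13 : Fin.succ ((13 : Fin 18)) = ((14) : Fin 19) := rfl

@[simp] lemma finsucc_18_14 : Fin.succ ((14 : Fin 18)) = ((15) : Fin 19) := rfl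

@[simp] lemma finsucc_18_15 : Fin.succ ((15 : Fin 18)) = ((16) : Fin 19) := rfl

@[simp] lemma finsucc_18_16 : Fin.succ ((16 : Fin 18)) = ((17) : Fin 19) := rfl

@[simp] lemma finsucc_18_17 : Fin.succ ((17 : Fin 18)) = ((18) : Fin 19) := rfl

@[simp] lemma finsucc_19_0 : Fin.succ ((0 : Fin 19)) = ((1) : Fin 20) := rfl

@[simp] lemma finsucc_19_1 : Fin.succ ((1 : Fin 19)) = ((2) : Fin 20) := rfl

@[simp] lemma finsucc_19_2 : Fin.succ ((2 : Fin 19)) = ((3) : Fin 20) := rfl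

@[simp] lemma finsucc_19_3 : Fin.succ ((3 : Fin 19)) = ((4) : Fin 20) := rfl

@[simp] lemma finsucc_19_4 : Fin.succ ((4 : Fin 19)) = ((5) : Fin 20) := rfl

@[simp] lemma finsucc_19_5 : Fin.succ ((5 : Fin 19)) = ((6) : Fin 20) := rfl

@[simp] lemma finsucc_19_6 : Fin.succ ((6 : Fin 19)) = ((7) : Fin 20) := rfl

@[simp] lemma finsucc_19_7 : Fin.succ ((7 : Fin 19)) = ((8) : Fin 20) := rfl

@[simp] lemma finsucc_19_8 : Fin.succ ((8 : Fin 19)) = ((9) : Fin 20) := rfl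

@[simp] lemma finsucc_19_9 : Fin.succ ((9 : Fin 19)) = ((10) : Fin 20) := rfl

@[simp] lemma finsucc_19_10 : Fin.succ ((10 : Fin 19)) = ((11) : Fin 20) := rfl

@[simp] lemma finsucc_19_11 : Fin.succ ((11 : Fin 19)) = ((12) : Fin 20) := rfl

@[simp] lemma finsucc_19_12 : Fin.succ ((12 : Fin 19)) = ((13) : Fin 20) := rfl

@[simp] lemma finsucc_19_13 : Fin.succ ((13 : Fin 19)) = ((14) : Fin 20) := rfl

@[simp] lemma finsucc_19_14 : Fin.succ ((14 : Fin 19)) = ((15) : Fin 20) := rfl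

@[simp] lemma finsucc_19_15 : Fin.succ ((15 : Fin 19)) = ((16) : Fin 20) := rfl

@[simp] lemma finsucc_19_16 : Fin.succ ((16 : Fin 19)) = ((17) : Fin 20) := rfl

@[simp] lemma finsucc_19_17 : Fin.succ ((17 : Fin 19)) = ((18) : Fin 20) := rfl

@[simp] lemma finsucc_19_18 : Fin.succ ((18 : Fin 19)) = ((19) : Fin 20) := rfl

@[simp] lemma finsucc_20_0 : Fin.succ ((0 : Fin 20)) = ((1) : Fin 21) := rfl

@[simp] lemma finsucc_20_1 : Fin.succ ((1 : Fin 20)) = ((2) : Fin 21) := rfl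

@[simp] lemma finsucc_20_2 : Fin.succ ((2 : Fin 20)) = ((3) : Fin 21) := rfl

@[simp] lemma finsucc_20_3 : Fin.succ ((3 : Fin 20)) = ((4) : Fin 21) := rfl

@[simp] lemma finsucc_20_4 : Fin.succ ((4 : Fin 20)) = ((5) : Fin 21) := rfl

@[simp] lemma finsucc_20_5 : Fin.succ ((5 : Fin 20)) = ((6) : Fin 21) := rfl

@[simp] lemma finsucc_20_6 : Fin.succ ((6 : Fin 20)) = ((7) : Fin 21) := rfl

@[simp] lemma finsucc_20_7 : Fin.succ ((7 : Fin 20)) = ((8) : Fin 21) := rfl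

@[simp] lemma finsucc_20_8 : Fin.succ ((8 : Fin 20)) = ((9) : Fin 21) := rfl

@[simp] lemma finsucc_20_9 : Fin.succ ((9 : Fin 20)) = ((10) : Fin 21) := rfl

@[simp] lemma finsucc_20_10 : Fin.succ ((10 : Fin 20)) = ((11) : Fin 21) := rfl

@[simp] lemma finsucc_20_11 : Fin.succ ((11 : Fin 20)) = ((12) : Fin 21) := rfl

@[simp] lemma finsucc_20_12 : Fin.succ ((12 : Fin 20)) = ((13) : Fin 21) := rfl

@[simp] lemma finsucc_20_13 : Fin.succ ((13 : Fin 20)) = ((14) : Fin 21) := rfl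

@[simp] lemma finsucc_20_14 : Fin.succ ((14 : Fin 20)) = ((15) : Fin 21) := rfl

@[simp] lemma finsucc_20_15 : Fin.succ ((15 : Fin 20)) = ((16) : Fin 21) := rfl

@[simp] lemma finsucc_20_16 : Fin.succ ((16 : Fin 20)) = ((17) : Fin 21) := rfl

@[simp] lemma finsucc_20_17 : Fin.succ ((17 : Fin 20)) = ((18) : Fin 21) := rfl

@[simp] lemma finsucc_20_18 : Fin.succ ((18 : Fin 20)) = ((19) : Fin 21) := rfl

@[simp] lemma finsucc_20_19 : Fin.succ ((19 : Fin 20)) = ((20) : Fin 21) := rfl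

lemma mapA_app_0 (a b c e : ℚ) (x : Fin 21 → ℚ) : mapA a b c e x (0 : Fin 21) = (((a^2+b^2+c^2+e^2+1)/2)) * x 0 + (((a^2+b^2+c^2+e^2-1)/2)) * x 2 := rfl

lemma mapA_app_1 (a b c e : ℚ) (x : Fin 21 → ℚ) : mapA a b c e x (1 : Fin 21) = (((a^2+b^2+c^2+e^2+1)/2)) * x 1 + (((a^2+b^2+c^2+e^2-1)/2)) * x 3 := rfl

lemma mapA_app_2 (a b c e : ℚ) (x : Fin 21 → ℚ) : mapA a b c e x (2 : Fin 21) = (((a^2+b^2+c^2+e^2-1)/2)) * x 0 + (((a^2+b^2+c^2+e^2+1)/2)) * x 2 := rfl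

lemma mapA_app_3 (a b c e : ℚ) (x : Fin 21 → ℚ) : mapA a b c e x (3 : Fin 21) = (((a^2+b^2+c^2+e^2-1)/2)) * x 1 + (((a^2+b^2+c^2+e^2+1)/2)) * x 3 := rfl

lemma mapA_app_4 (a b c e : ℚ) (x : Fin 21 → ℚ) : mapA a b c e x (4 : Fin 21) = (a) * x 4 + (-b) * x 5 + (-c) * x 6 + (-e) * x 7 := rfl

lemma mapA_app_5 (a b c e : ℚ) (x : Fin 21 → ℚ) : mapA a b c e x (5 : Fin 21) = (b) * x 4 + (a) * x 5 + (-e) * x 6 + (c) * x 7 := rfl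

lemma mapA_app_6 (a b c e : ℚ) (x : Fin 21 → ℚ) : mapA a b c e x (6 : Fin 21) = (c) * x 4 + (e) * x 5 + (a) * x 6 + (-b) * x 7 := rfl

lemma mapA_app_7 (a b c e : ℚ) (x : Fin 21 → ℚ) : mapA a b c e x (7 : Fin 21) = (e) * x 4 + (-c) * x 5 + (b) * x 6 + (a) * x 7 := rfl

lemma mapA_app_8 (a b c e : ℚ) (x : Fin 21 → ℚ) : mapA a b c e x (8 : Fin 21) = (a) * x 8 + (-b) * x 9 + (-c) * x 10 + (-e) * x 11 := rfl

lemma mapA_app_9 (a b c e : ℚ) (x : Fin 21 → ℚ) : mapA a b c e x (9 : Fin 21) = (b) * x 8 + (a) * x 9 + (-e) * x 10 + (c) * x 11 := rfl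

lemma mapA_app_10 (a b c e : ℚ) (x : Fin 21 → ℚ) : mapA a b c e x (10 : Fin 21) = (c) * x 8 + (e) * x 9 + (a) * x 10 + (-b) * x 11 := rfl

lemma mapA_app_11 (a b c e : ℚ) (x : Fin 21 → ℚ) : mapA a b c e x (11 : Fin 21) = (e) * x 8 + (-c) * x 9 + (b) * x 10 + (a) * x 11 := rfl

lemma mapA_app_12 (a b c e : ℚ) (x : Fin 21 → ℚ) : mapA a b c e x (12 : Fin 21) = (a) * x 12 + (-b) * x 13 + (-c) * x 14 + (-e) * x 15 := rfl

lemma mapA_app_13 (a b c e : ℚ) (x : Fin 21 → ℚ) : mapA a b c e x (13 : Fin 21) = (b) * x 12 + (a) * x 13 + (-e) * x 14 + (c) * x 15 := rfl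

lemma mapA_app_14 (a b c e : ℚ) (x : Fin 21 → ℚ) : mapA a b c e x (14 : Fin 21) = (c) * x 12 + (e) * x 13 + (a) * x 14 + (-b) * x 15 := rfl

lemma mapA_app_15 (a b c e : ℚ) (x : Fin 21 → ℚ) : mapA a b c e x (15 : Fin 21) = (e) * x 12 + (-c) * x 13 + (b) * x 14 + (a) * x 15 := rfl

lemma mapA_app_16 (a b c e : ℚ) (x : Fin 21 → ℚ) : mapA a b c e x (16 : Fin 21) = (a) * x 16 + (-b) * x 17 + (-c) * x 18 + (-e) * x 19 := rfl

lemma mapA_app_17 (a b c e : ℚ) (x : Fin 21 → ℚ) : mapA a b c e x (17 : Fin 21) = (b) * x 16 + (a) * x 17 + (-e) * x 18 + (c) * x 19 := rfl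

lemma mapA_app_18 (a b c e : ℚ) (x : Fin 21 → ℚ) : mapA a b c e x (18 : Fin 21) = (c) * x 16 + (e) * x 17 + (a) * x 18 + (-b) * x 19 := rfl

lemma mapA_app_19 (a b c e : ℚ) (x : Fin 21 → ℚ) : mapA a b c e x (19 : Fin 21) = (e) * x 16 + (-c) * x 17 + (b) * x 18 + (a) * x 19 := rfl

lemma mapA_app_20 (a b c e : ℚ) (x : Fin 21 → ℚ) : mapA a b c e x (20 : Fin 21) = ((1:ℚ)) * x 20 := rfl

lemma mapB_app_0 (a b c e : ℚ) (x : Fin 21 → ℚ) : mapB a b c e x (0 : Fin 21) = (((a^2+b^2+c^2+e^2+1)/2)) * x 0 + (-((a^2+b^2+c^2+e^2-1)/2)) * x 2 := rfl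

lemma mapB_app_1 (a b c e : ℚ) (x : Fin 21 → ℚ) : mapB a b c e x (1 : Fin 21) = (((a^2+b^2+c^2+e^2+1)/2)) * x 1 + (-((a^2+b^2+c^2+e^2-1)/2)) * x 3 := rfl

lemma mapB_app_2 (a b c e : ℚ) (x : Fin 21 → ℚ) : mapB a b c e x (2 : Fin 21) = (-((a^2+b^2+c^2+e^2-1)/2)) * x 0 + (((a^2+b^2+c^2+e^2+1)/2)) * x 2 := rfl

lemma mapB_app_3 (a b c e : ℚ) (x : Fin 21 → ℚ) : mapB a b c e x (3 : Fin 21) = (-((a^2+b^2+c^2+e^2-1)/2)) * x 1 + (((a^2+b^2+c^2+e^2+1)/2)) * x 3 := rfl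

lemma mapB_app_4 (a b c e : ℚ) (x : Fin 21 → ℚ) : mapB a b c e x (4 : Fin 21) = (a) * x 4 + (b) * x 5 + (c) * x 6 + (e) * x 7 := rfl

lemma mapB_app_5 (a b c e : ℚ) (x : Fin 21 → ℚ) : mapB a b c e x (5 : Fin 21) = (-b) * x 4 + (a) * x 5 + (e) * x 6 + (-c) * x 7 := rfl

lemma mapB_app_6 (a b c e : ℚ) (x : Fin 21 → ℚ) : mapB a b c e x (6 : Fin 21) = (-c) * x 4 + (-e) * x 5 + (a) * x 6 + (b) * x 7 := rfl

lemma mapB_app_7 (a b c e : ℚ) (x : Fin 21 → ℚ) : mapB a b c e x (7 : Fin 21) = (-e) * x 4 + (c) * x 5 + (-b) * x 6 + (a) * x 7 := rfl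

lemma mapB_app_8 (a b c e : ℚ) (x : Fin 21 → ℚ) : mapB a b c e x (8 : Fin 21) = (a) * x 8 + (b) * x 9 + (c) * x 10 + (e) * x 11 := rfl

lemma mapB_app_9 (a b c e : ℚ) (x : Fin 21 → ℚ) : mapB a b c e x (9 : Fin 21) = (-b) * x 8 + (a) * x 9 + (e) * x 10 + (-c) * x 11 := rfl

lemma mapB_app_10 (a b c e : ℚ) (x : Fin 21 → ℚ) : mapB a b c e x (10 : Fin 21) = (-c) * x 8 + (-e) * x 9 + (a) * x 10 + (b) * x 11 := rfl

lemma mapB_app_11 (a b c e : ℚ) (x : Fin 21 → ℚ) : mapB a b c e x (11 : Fin 21) = (-e) * x 8 + (c) * x 9 + (-b) * x 10 + (a) * x 11 := rfl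

lemma mapB_app_12 (a b c e : ℚ) (x : Fin 21 → ℚ) : mapB a b c e x (12 : Fin 21) = (a) * x 12 + (b) * x 13 + (c) * x 14 + (e) * x 15 := rfl

lemma mapB_app_13 (a b c e : ℚ) (x : Fin 21 → ℚ) : mapB a b c e x (13 : Fin 21) = (-b) * x 12 + (a) * x 13 + (e) * x 14 + (-c) * x 15 := rfl

lemma mapB_app_14 (a b c e : ℚ) (x : Fin 21 → ℚ) : mapB a b c e x (14 : Fin 21) = (-c) * x 12 + (-e) * x 13 + (a) * x 14 + (b) * x 15 := rfl

lemma mapB_app_15 (a b c e : ℚ) (x : Fin 21 → ℚ) : mapB a b c e x (15 : Fin 21) = (-e) * x 12 + (c) * x 13 + (-b) * x 14 + (a) * x 15 := rfl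

lemma mapB_app_16 (a b c e : ℚ) (x : Fin 21 → ℚ) : mapB a b c e x (16 : Fin 21) = (a) * x 16 + (b) * x 17 + (c) * x 18 + (e) * x 19 := rfl

lemma mapB_app_17 (a b c e : ℚ) (x : Fin 21 → ℚ) : mapB a b c e x (17 : Fin 21) = (-b) * x 16 + (a) * x 17 + (e) * x 18 + (-c) * x 19 := rfl

lemma mapB_app_18 (a b c e : ℚ) (x : Fin 21 → ℚ) : mapB a b c e x (18 : Fin 21) = (-c) * x 16 + (-e) * x 17 + (a) * x 18 + (b) * x 19 := rfl

lemma mapB_app_19 (a b c e : ℚ) (x : Fin 21 → ℚ) : mapB a b c e x (19 : Fin 21) = (-e) * x 16 + (c) * x 17 + (-b) * x 18 + (a) * x 19 := rfl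

lemma mapB_app_20 (a b c e : ℚ) (x : Fin 21 → ℚ) : mapB a b c e x (20 : Fin 21) = ((a^2+b^2+c^2+e^2)) * x 20 := rfl


set_option maxHeartbeats 1000000 in
lemma hBA (a b c e : ℚ) (x : Fin 21 → ℚ) :
    ∀ i, mapB a b c e (mapA a b c e x) i = (a^2+b^2+c^2+e^2) * x i := by
  simp only [Fin.forall_fin_succ, IsEmpty.forall_iff, and_true, finsucc_1_0, finsucc_2_0, finsucc_2_1, finsucc_3_0, finsucc_3_1, finsucc_3_2, finsucc_4_0, finsucc_4_1, finsucc_4_2, finsucc_4_3, finsucc_5_0, finsucc_5_1, finsucc_5_2, finsucc_5_3, finsucc_5_4, finsucc_6_0, finsucc_6_1, finsucc_6_2, finsucc_6_3, finsucc_6_4, finsucc_6_5, finsucc_7_0, finsucc_7_1, finsucc_7_2, finsucc_7_3, finsucc_7_4, finsucc_7_5, finsucc_7_6, finsucc_8_0, finsucc_8_1, finsucc_8_2, finsucc_8_3, finsucc_8_4, finsucc_8_5, finsucc_8_6, finsucc_8_7, finsucc_9_0, finsucc_9_1, finsucc_9_2, finsucc_9_3, finsucc_9_4, finsucc_9_5,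 finsucc_9_6, finsucc_9_7, finsucc_9_8, finsucc_10_0, finsucc_10_1, finsucc_10_2, finsucc_10_3, finsucc_10_4, finsucc_10_5, finsucc_10_6, finsucc_10_7, finsucc_10_8, finsucc_10_9, finsucc_11_0, finsucc_11_1, finsucc_11_2, finsucc_11_3, finsucc_11_4, finsucc_11_5, finsucc_11_6, finsucc_11_7, finsucc_11_8, finsucc_11_9, finsucc_11_10, finsucc_12_0, finsucc_12_1, finsucc_12_2, finsucc_12_3, finsucc_12_4, finsucc_12_5, finsucc_12_6, finsucc_12_7, finsucc_12_8, finsucc_12_9, finsucc_12_10, finsucc_12_11, finsucc_13_0, finsucc_13_1, finsucc_13_2, finsucc_13_3, finsucc_13_4, finsucc_13_5, finsucc_13_6, finsucc_13_7, finsucc_13_8, finsucc_13_9, finsucc_13_10, finsucc_13_11, finsucc_13_12, finsucc_14_0, finsucc_14_1, finsucc_14_2, finsucc_14_3, finsucc_14_4, finsucc_14_5, finsucc_14_6, finsucc_14_7, finsucc_14_8, finsucc_14_9, finsucc_14_10, finsucc_14_11, finsucc_14_12, finsucc_14_13, finsucc_15_0, finsucc_15_1, finsucc_15_2, finsucc_15_3,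 finsucc_15_4, finsucc_15_5, finsucc_15_6, finsucc_15_7, finsucc_15_8, finsucc_15_9, finsucc_15_10, finsucc_15_11, finsucc_15_12, finsucc_15_13, finsucc_15_14, finsucc_16_0, finsucc_16_1, finsucc_16_2, finsucc_16_3, finsucc_16_4, finsucc_16_5, finsucc_16_6, finsucc_16_7, finsucc_16_8, finsucc_16_9, finsucc_16_10, finsucc_16_11, finsucc_16_12, finsucc_16_13, finsucc_16_14, finsucc_16_15, finsucc_17_0, finsucc_17_1, finsucc_17_2, finsucc_17_3, finsucc_17_4, finsucc_17_5, finsucc_17_6, finsucc_17_7, finsucc_17_8, finsucc_17_9, finsucc_17_10, finsucc_17_11, finsucc_17_12, finsucc_17_13, finsucc_17_14, finsucc_17_15, finsucc_17_16, finsucc_18_0, finsucc_18_1, finsucc_18_2, finsucc_18_3, finsucc_18_4, finsucc_18_5, finsucc_18_6, finsucc_18_7, finsucc_18_8, finsucc_18_9, finsucc_18_10, finsucc_18_11, finsucc_18_12, finsucc_18_13, finsucc_18_14, finsucc_18_15, finsucc_18_16, finsucc_18_17, finsucc_19_0, finsucc_19_1, finsucc_19_2, finsucc_19_3, finsucc_19_4,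 finsucc_19_5, finsucc_19_6, finsucc_19_7, finsucc_19_8, finsucc_19_9, finsucc_19_10, finsucc_19_11, finsucc_19_12, finsucc_19_13, finsucc_19_14, finsucc_19_15, finsucc_19_16, finsucc_19_17, finsucc_19_18, finsucc_20_0, finsucc_20_1, finsucc_20_2, finsucc_20_3, finsucc_20_4, finsucc_20_5, finsucc_20_6, finsucc_20_7, finsucc_20_8, finsucc_20_9, finsucc_20_10, finsucc_20_11, finsucc_20_12, finsucc_20_13, finsucc_20_14, finsucc_20_15, finsucc_20_16, finsucc_20_17, finsucc_20_18, finsucc_20_19]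
  refine ⟨?_,?_,?_,?_,?_,?_,?_,?_,?_,?_,?_,?_,?_,?_,?_,?_,?_,?_,?_,?_,?_⟩ <;>
    (simp only [mapA_app_0, mapA_app_1, mapA_app_2, mapA_app_3, mapA_app_4, mapA_app_5, mapA_app_6, mapA_app_7, mapA_app_8, mapA_app_9, mapA_app_10, mapA_app_11, mapA_app_12, mapA_app_13, mapA_app_14, mapA_app_15, mapA_app_16, mapA_app_17, mapA_app_18, mapA_app_19, mapA_app_20, mapB_app_0, mapB_app_1, mapB_app_2, mapB_app_3, mapB_app_4, mapB_app_5, mapB_app_6, mapB_app_7, mapB_app_8, mapB_app_9, mapB_app_10, mapB_app_11, mapB_app_12, mapB_app_13, mapB_app_14, mapB_app_15, mapB_app_16, mapB_app_17, mapB_app_18, mapB_app_19, mapB_app_20]; ring)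

set_option maxHeartbeats 1000000 in
lemma hAB (a b c e : ℚ) (x : Fin 21 → ℚ) :
    ∀ i, mapA a b c e (mapB a b c e x) i = (a^2+b^2+c^2+e^2) * x i := by
  simp only [Fin.forall_fin_succ, IsEmpty.forall_iff, and_true, finsucc_1_0, finsucc_2_0, finsucc_2_1, finsucc_3_0, finsucc_3_1, finsucc_3_2, finsucc_4_0, finsucc_4_1, finsucc_4_2, finsucc_4_3, finsucc_5_0, finsucc_5_1, finsucc_5_2, finsucc_5_3, finsucc_5_4, finsucc_6_0, finsucc_6_1, finsucc_6_2, finsucc_6_3, finsucc_6_4, finsucc_6_5, finsucc_7_0, finsucc_7_1, finsucc_7_2, finsucc_7_3, finsucc_7_4, finsucc_7_5, finsucc_7_6, finsucc_8_0, finsucc_8_1, finsucc_8_2, finsucc_8_3, finsucc_8_4, finsucc_8_5, finsucc_8_6, finsucc_8_7, finsucc_9_0, finsucc_9_1, finsucc_9_2, finsucc_9_3, finsucc_9_4, finsucc_9_5, finsucc_9_6, finsucc_9_7, finsucc_9_8, finsucc_10_0, finsucc_10_1, finsucc_10_2, finsucc_10_3, finsucc_10_4, finsucc_10_5, finsucc_10_6,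 finsucc_10_7, finsucc_10_8, finsucc_10_9, finsucc_11_0, finsucc_11_1, finsucc_11_2, finsucc_11_3, finsucc_11_4, finsucc_11_5, finsucc_11_6, finsucc_11_7, finsucc_11_8, finsucc_11_9, finsucc_11_10, finsucc_12_0, finsucc_12_1, finsucc_12_2, finsucc_12_3, finsucc_12_4, finsucc_12_5, finsucc_12_6, finsucc_12_7, finsucc_12_8, finsucc_12_9, finsucc_12_10, finsucc_12_11, finsucc_13_0, finsucc_13_1, finsucc_13_2, finsucc_13_3, finsucc_13_4, finsucc_13_5, finsucc_13_6, finsucc_13_7, finsucc_13_8, finsucc_13_9, finsucc_13_10, finsucc_13_11, finsucc_13_12, finsucc_14_0, finsucc_14_1, finsucc_14_2, finsucc_14_3, finsucc_14_4, finsucc_14_5, finsucc_14_6, finsucc_14_7, finsucc_14_8, finsucc_14_9, finsucc_14_10, finsucc_14_11, finsucc_14_12, finsucc_14_13, finsucc_15_0, finsucc_15_1, finsucc_15_2, finsucc_15_3, finsucc_15_4, finsucc_15_5, finsucc_15_6, finsucc_15_7, finsucc_15_8, finsucc_15_9, finsucc_15_10, finsucc_15_11, finsucc_15_12, finsucc_15_13,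 finsucc_15_14, finsucc_16_0, finsucc_16_1, finsucc_16_2, finsucc_16_3, finsucc_16_4, finsucc_16_5, finsucc_16_6, finsucc_16_7, finsucc_16_8, finsucc_16_9, finsucc_16_10, finsucc_16_11, finsucc_16_12, finsucc_16_13, finsucc_16_14, finsucc_16_15, finsucc_17_0, finsucc_17_1, finsucc_17_2, finsucc_17_3, finsucc_17_4, finsucc_17_5, finsucc_17_6, finsucc_17_7, finsucc_17_8, finsucc_17_9, finsucc_17_10, finsucc_17_11, finsucc_17_12, finsucc_17_13, finsucc_17_14, finsucc_17_15, finsucc_17_16, finsucc_18_0, finsucc_18_1, finsucc_18_2, finsucc_18_3, finsucc_18_4, finsucc_18_5, finsucc_18_6, finsucc_18_7, finsucc_18_8, finsucc_18_9, finsucc_18_10, finsucc_18_11, finsucc_18_12, finsucc_18_13, finsucc_18_14, finsucc_18_15, finsucc_18_16, finsucc_18_17, finsucc_19_0, finsucc_19_1, finsucc_19_2, finsucc_19_3, finsucc_19_4, finsucc_19_5, finsucc_19_6, finsucc_19_7, finsucc_19_8, finsucc_19_9, finsucc_19_10, finsucc_19_11, finsucc_19_12, finsucc_19_13, finsucc_19_14,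 finsucc_19_15, finsucc_19_16, finsucc_19_17, finsucc_19_18, finsucc_20_0, finsucc_20_1, finsucc_20_2, finsucc_20_3, finsucc_20_4, finsucc_20_5, finsucc_20_6, finsucc_20_7, finsucc_20_8, finsucc_20_9, finsucc_20_10, finsucc_20_11, finsucc_20_12, finsucc_20_13, finsucc_20_14, finsucc_20_15, finsucc_20_16, finsucc_20_17, finsucc_20_18, finsucc_20_19]
  refine ⟨?_,?_,?_,?_,?_,?_,?_,?_,?_,?_,?_,?_,?_,?_,?_,?_,?_,?_,?_,?_,?_⟩ <;>
    (simp only [mapA_app_0, mapA_app_1, mapA_app_2, mapA_app_3, mapA_app_4, mapA_app_5, mapA_app_6, mapA_app_7, mapA_app_8, mapA_app_9, mapA_app_10, mapA_app_11, mapA_app_12, mapA_app_13, mapA_app_14, mapA_app_15, mapA_app_16, mapA_app_17, mapA_app_18, mapA_app_19, mapA_app_20, mapB_app_0, mapB_app_1, mapB_app_2, mapB_app_3, mapB_app_4, mapB_app_5, mapB_app_6, mapB_app_7, mapB_app_8, mapB_app_9, mapB_app_10, mapB_app_11, mapB_app_12, mapB_app_13, mapB_app_14, mapB_app_15, mapB_app_16,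 mapB_app_17, mapB_app_18, mapB_app_19, mapB_app_20]; ring)

set_option maxHeartbeats 1000000 in
lemma Qd_eval (d : ℚ) (v : Fin 21 → ℚ) : Qd d v =
    -(v 0^2) - v 1^2 + (v 2^2 + v 3^2 + v 4^2 + v 5^2 + v 6^2 + v 7^2 + v 8^2 + v 9^2 + v 10^2 + v 11^2 + v 12^2 + v 13^2 + v 14^2 + v 15^2 + v 16^2 + v 17^2 + v 18^2 + v 19^2) + d * v 20^2 := by
  simp only [Qd, Finset.sum_filter, Fin.sum_univ_succ, Finset.sum_const_zero, Fin.val_succ,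
    Finset.univ_eq_empty, Finset.sum_empty, finsucc_1_0, finsucc_2_0, finsucc_2_1, finsucc_3_0, finsucc_3_1, finsucc_3_2, finsucc_4_0, finsucc_4_1, finsucc_4_2, finsucc_4_3, finsucc_5_0, finsucc_5_1, finsucc_5_2, finsucc_5_3, finsucc_5_4, finsucc_6_0, finsucc_6_1, finsucc_6_2, finsucc_6_3, finsucc_6_4, finsucc_6_5, finsucc_7_0, finsucc_7_1, finsucc_7_2, finsucc_7_3, finsucc_7_4, finsucc_7_5, finsucc_7_6, finsucc_8_0, finsucc_8_1, finsucc_8_2, finsucc_8_3, finsucc_8_4, finsucc_8_5, finsucc_8_6, finsucc_8_7, finsucc_9_0, finsucc_9_1, finsucc_9_2, finsucc_9_3, finsucc_9_4, finsucc_9_5, finsucc_9_6, finsucc_9_7, finsucc_9_8, finsucc_10_0, finsucc_10_1, finsucc_10_2, finsucc_10_3, finsucc_10_4, finsucc_10_5, finsucc_10_6, finsucc_10_7, finsucc_10_8, finsucc_10_9, finsucc_11_0, finsucc_11_1, finsucc_11_2, finsucc_11_3, finsucc_11_4, finsucc_11_5, finsucc_11_6, finsucc_11_7, finsucc_11_8,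 finsucc_11_9, finsucc_11_10, finsucc_12_0, finsucc_12_1, finsucc_12_2, finsucc_12_3, finsucc_12_4, finsucc_12_5, finsucc_12_6, finsucc_12_7, finsucc_12_8, finsucc_12_9, finsucc_12_10, finsucc_12_11, finsucc_13_0, finsucc_13_1, finsucc_13_2, finsucc_13_3, finsucc_13_4, finsucc_13_5, finsucc_13_6, finsucc_13_7, finsucc_13_8, finsucc_13_9, finsucc_13_10, finsucc_13_11, finsucc_13_12, finsucc_14_0, finsucc_14_1, finsucc_14_2, finsucc_14_3, finsucc_14_4, finsucc_14_5, finsucc_14_6, finsucc_14_7, finsucc_14_8, finsucc_14_9, finsucc_14_10, finsucc_14_11, finsucc_14_12, finsucc_14_13, finsucc_15_0, finsucc_15_1, finsucc_15_2, finsucc_15_3, finsucc_15_4, finsucc_15_5, finsucc_15_6, finsucc_15_7, finsucc_15_8, finsucc_15_9, finsucc_15_10, finsucc_15_11, finsucc_15_12, finsucc_15_13, finsucc_15_14, finsucc_16_0, finsucc_16_1, finsucc_16_2, finsucc_16_3, finsucc_16_4, finsucc_16_5, finsucc_16_6, finsucc_16_7, finsucc_16_8, finsucc_16_9, finsucc_16_10,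 finsucc_16_11, finsucc_16_12, finsucc_16_13, finsucc_16_14, finsucc_16_15, finsucc_17_0, finsucc_17_1, finsucc_17_2, finsucc_17_3, finsucc_17_4, finsucc_17_5, finsucc_17_6, finsucc_17_7, finsucc_17_8, finsucc_17_9, finsucc_17_10, finsucc_17_11, finsucc_17_12, finsucc_17_13, finsucc_17_14, finsucc_17_15, finsucc_17_16, finsucc_18_0, finsucc_18_1, finsucc_18_2, finsucc_18_3, finsucc_18_4, finsucc_18_5, finsucc_18_6, finsucc_18_7, finsucc_18_8, finsucc_18_9, finsucc_18_10, finsucc_18_11, finsucc_18_12, finsucc_18_13, finsucc_18_14, finsucc_18_15, finsucc_18_16, finsucc_18_17, finsucc_19_0, finsucc_19_1, finsucc_19_2, finsucc_19_3, finsucc_19_4, finsucc_19_5, finsucc_19_6, finsucc_19_7, finsucc_19_8, finsucc_19_9, finsucc_19_10, finsucc_19_11, finsucc_19_12, finsucc_19_13, finsucc_19_14, finsucc_19_15, finsucc_19_16, finsucc_19_17, finsucc_19_18, finsucc_20_0, finsucc_20_1, finsucc_20_2, finsucc_20_3, finsucc_20_4, finsucc_20_5, finsucc_20_6, finsucc_20_7,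 finsucc_20_8, finsucc_20_9, finsucc_20_10, finsucc_20_11, finsucc_20_12, finsucc_20_13, finsucc_20_14, finsucc_20_15, finsucc_20_16, finsucc_20_17, finsucc_20_18, finsucc_20_19]
  norm_num
  try ring

set_option maxHeartbeats 1000000 in
lemma hQ (a b c e : ℚ) (x : Fin 21 → ℚ) :
    Qd (a^2+b^2+c^2+e^2) (mapA a b c e x) = (a^2+b^2+c^2+e^2) * Qd 1 x := by
  rw [Qd_eval, Qd_eval]
  simp only [mapA_app_0, mapA_app_1, mapA_app_2, mapA_app_3, mapA_app_4, mapA_app_5, mapA_app_6, mapA_app_7, mapA_app_8, mapA_app_9, mapA_app_10, mapA_app_11, mapA_app_12, mapA_app_13, mapA_app_14, mapA_app_15, mapA_app_16, mapA_app_17, mapA_app_18, mapA_app_19, mapA_app_20]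
  ring



lemma mem_SOQ (d : ℚ) (g : LinearMap.GeneralLinearGroup ℚ (Fin 21 → ℚ)) :
    g ∈ SOQ d ↔ (LinearMap.det (g.val : End21) = 1 ∧
      ∀ x : Fin 21 → ℚ, Qd d ((g.val : End21) x) = Qd d x) := Iff.rfl

/-- For every squarefree positive integer `d`, the groups `SO(Q₁)(ℚ)` and `SO(Q_d)(ℚ)`
are isomorphic as groups. -/
theorem SOQ1_iso_SOQd (d : ℕ) (hd : 0 < d) (hsf : Squarefree d) :
    Nonempty ((SOQ 1) ≃* (SOQ d)) := by
  obtain ⟨a0, b0, c0, e0, habce⟩ := Nat.sum_four_squares d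
  have hd0 : (d : ℚ) ≠ 0 := Nat.cast_ne_zero.mpr hd.ne'
  have hD : ((a0:ℚ))^2 + (b0:ℚ)^2 + (c0:ℚ)^2 + (e0:ℚ)^2 = (d:ℚ) := by
    exact_mod_cast congrArg (Nat.cast : ℕ → ℚ) habce
  set A : End21 := mapA a0 b0 c0 e0 with hAdef
  set Bi : End21 := ((d:ℚ))⁻¹ • mapB a0 b0 c0 e0 with hBidef
  -- basic composition identities
  have hABv : ∀ x, mapA (a0:ℚ) b0 c0 e0 (mapB a0 b0 c0 e0 x) = (d:ℚ) • x := by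
    intro x; funext i
    rw [hAB (a0:ℚ) b0 c0 e0 x i, hD]; simp [Pi.smul_apply, smul_eq_mul]
  have hBAv : ∀ x, mapB (a0:ℚ) b0 c0 e0 (mapA a0 b0 c0 e0 x) = (d:ℚ) • x := by
    intro x; funext i
    rw [hBA (a0:ℚ) b0 c0 e0 x i, hD]; simp [Pi.smul_apply, smul_eq_mul]
  have hA_Bi : ∀ x, A (Bi x) = x := by
    intro x
    rw [hBidef, LinearMap.smul_apply, map_smul, hABv, smul_smul,
      inv_mul_cancel₀ hd0, one_smul]
  have hBi_A : ∀ x, Bi (A x) = x := by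
    intro x
    rw [hBidef, LinearMap.smul_apply, hAdef, hBAv, smul_smul,
      inv_mul_cancel₀ hd0, one_smul]
  -- quadratic form identities
  have k3 : ∀ x, Qd (d:ℚ) (A x) = (d:ℚ) * Qd 1 x := by
    intro x
    have h := hQ (a0:ℚ) b0 c0 e0 x
    rw [hD] at h
    exact h
  have k6 : ∀ y, Qd 1 (Bi y) = ((d:ℚ))⁻¹ * Qd (d:ℚ) y := by
    intro y
    have h : Qd (d:ℚ) y = (d:ℚ) * Qd 1 (Bi y) := by
      conv_lhs => rw [← hA_Bi y]
      exact k3 (Bi y)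
    rw [h]
    field_simp
  -- the unit
  have hval_inv : (A * Bi : End21) = 1 := LinearMap.ext fun x => by
    rw [Module.End.mul_apply, hA_Bi, Module.End.one_apply]
  have hinv_val : (Bi * A : End21) = 1 := LinearMap.ext fun x => by
    rw [Module.End.mul_apply, hBi_A, Module.End.one_apply]
  set t : LinearMap.GeneralLinearGroup ℚ (Fin 21 → ℚ) := ⟨A, Bi, hval_inv, hinv_val⟩ with htdef
  have hdet : ∀ g : LinearMap.GeneralLinearGroup ℚ (Fin 21 → ℚ),
      LinearMap.det (Bi * (g.val : End21) * A) = LinearMap.det (g.val : End21) := by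
    intro g
    have h1 : LinearMap.det Bi * LinearMap.det A = 1 := by
      have := congrArg LinearMap.det hinv_val
      rwa [map_mul, map_one] at this
    rw [map_mul, map_mul]
    linear_combination (LinearMap.det (g.val : End21)) * h1
  have hmap : (SOQ 1).map ((MulAut.conj t).toMonoidHom) = SOQ (d:ℚ) := by
    ext g
    rw [Subgroup.mem_map_equiv]
    have hsymm : (MulAut.conj t).symm g = t⁻¹ * g * t := by
      simp [MulAut.conj_symm_apply]
    rw [hsymm, mem_SOQ, mem_SOQ]
    have hvalconj : ((t⁻¹ * g * t).val : End21) = Bi * (g.val : End21) * A := rfl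
    rw [hvalconj]
    constructor
    · rintro ⟨h1, h2⟩
      refine ⟨by rw [hdet g] at h1; exact h1, fun y => ?_⟩
      have happ : (Bi * (g.val : End21) * A) (Bi y) = Bi ((g.val : End21) (A (Bi y))) := rfl
      have h2' := h2 (Bi y)
      rw [happ] at h2'
      have step : Qd (d:ℚ) ((g.val : End21) (A (Bi y))) = Qd (d:ℚ) y := by
        calc Qd (d:ℚ) ((g.val : End21) (A (Bi y)))
            = Qd (d:ℚ) (A (Bi ((g.val : End21) (A (Bi y))))) := by
              rw [hA_Bi ((g.val : End21) (A (Bi y)))]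
          _ = (d:ℚ) * Qd 1 (Bi ((g.val : End21) (A (Bi y)))) := k3 _
          _ = (d:ℚ) * Qd 1 (Bi y) := by rw [h2']
          _ = (d:ℚ) * (((d:ℚ))⁻¹ * Qd (d:ℚ) y) := by rw [k6]
          _ = Qd (d:ℚ) y := by field_simp
      conv_lhs => rw [← hA_Bi y]
      exact step
    · rintro ⟨h1, h2⟩
      refine ⟨by rw [hdet g]; exact h1, fun x => ?_⟩
      have happ : (Bi * (g.val : End21) * A) x = Bi ((g.val : End21) (A x)) := rfl
      rw [happ]
      calc Qd 1 (Bi ((g.val : End21) (A x)))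
          = ((d:ℚ))⁻¹ * Qd (d:ℚ) ((g.val : End21) (A x)) := k6 _
        _ = ((d:ℚ))⁻¹ * Qd (d:ℚ) (A x) := by rw [h2]
        _ = ((d:ℚ))⁻¹ * ((d:ℚ) * Qd 1 x) := by rw [k3]
        _ = Qd 1 x := by field_simp
  exact ⟨(MulEquiv.subgroupMap (MulAut.conj t) (SOQ 1)).trans (MulEquiv.subgroupCongr hmap)⟩
end
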